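/- Let r : [0, π/2] → (0, +∞) be a C² function such that r(θ)r''(θ) < 2r'(θ)² + r(θ)² for almost every θ ∈ [0, π/2] and r'(0) = r'(π/2) = 0. Then −cot η < r'(η)/r(η) < tan η for every η ∈ (0, π/2). -/

import Mathlib

open Real MeasureTheory

open Topology Filter

noncomputable section

/-- Lemma 7.3: if `r : [0, π/2] → (0, ∞)` is `C²` with
`r r'' < 2 r'² + r²` almost everywhere on `[0, π/2]` and `r'(0) = r'(π/2) = 0`, then
`−cot η < r'(η)/r(η) < tan η` for every `η ∈ (0, π/2)`. -/
theorem polar_slope_bounds (r : ℝ → ℝ)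
    (hr : ContDiffOn ℝ 2 r (Set.Icc 0 (π / 2)))
    (hpos : ∀ θ ∈ Set.Icc (0 : ℝ) (π / 2), 0 < r θ)
    (hae : ∀ᵐ θ ∂(volume : Measure ℝ), θ ∈ Set.Icc (0 : ℝ) (π / 2) →
      r θ * derivWithin (derivWithin r (Set.Icc 0 (π / 2))) (Set.Icc 0 (π / 2)) θ
        < 2 * derivWithin r (Set.Icc 0 (π / 2)) θ ^ 2 + r θ ^ 2)
    (h0 : derivWithin r (Set.Icc 0 (π / 2)) 0 = 0)
    (h2 : derivWithin r (Set.Icc 0 (π / 2)) (π / 2) = 0) :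
    ∀ η ∈ Set.Ioo (0 : ℝ) (π / 2),
      -(cos η / sin η) < derivWithin r (Set.Icc 0 (π / 2)) η / r η ∧
      derivWithin r (Set.Icc 0 (π / 2)) η / r η < tan η := by
  have hπ : (0 : ℝ) < π / 2 := by positivity
  set I : Set ℝ := Set.Icc 0 (π / 2) with hI
  set r1 : ℝ → ℝ := derivWithin r I with hr1def
  set r2 : ℝ → ℝ := derivWithin r1 I with hr2def
  set G : ℝ → ℝ := fun θ => r θ * r2 θ - (2 * r1 θ ^ 2 + r θ ^ 2) with hGdef
  set f : ℝ → ℝ := fun θ => r1 θ / r θ with hfdef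
  set φ : ℝ → ℝ := fun θ => arctan (f θ) - θ with hφdef
  have hU : UniqueDiffOn ℝ I := uniqueDiffOn_Icc hπ
  have hIint : interior I = Set.Ioo 0 (π / 2) := interior_Icc
  -- continuity facts
  have hcr : ContinuousOn r I := hr.continuousOn
  have hcr1 : ContinuousOn r1 I := hr.continuousOn_derivWithin hU (by norm_num)
  have hC1r1 : ContDiffOn ℝ 1 r1 I := hr.derivWithin hU (by norm_num)
  have hcr2 : ContinuousOn r2 I := hC1r1.continuousOn_derivWithin hU (by norm_num)
  have hrne : ∀ θ ∈ I, r θ ≠ 0 := fun θ hθ => (hpos θ hθ).ne'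
  have hcf : ContinuousOn f I := hcr1.div hcr hrne
  have hcφ : ContinuousOn φ I :=
    (Real.continuous_arctan.comp_continuousOn hcf).sub continuousOn_id
  have hcG : ContinuousOn G I :=
    (hcr.mul hcr2).sub (((continuousOn_const.mul (hcr1.pow 2)).add (hcr.pow 2)))
  -- the null set where the a.e. hypothesis fails
  have hae' : ∀ᵐ θ ∂(volume : Measure ℝ), θ ∈ I → G θ < 0 := by
    filter_upwards [hae] with θ hθ hmem
    have := hθ hmem
    simp only [hGdef]
    linarith
  have hN : volume {θ : ℝ | ¬ (θ ∈ I → G θ < 0)} = 0 := ae_iff.mp hae'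
  -- no open subinterval of I has G ≥ 0 everywhere
  have hGcontra : ∀ a b : ℝ, a ∈ I → b ∈ I → a < b →
      ¬ (∀ t ∈ Set.Ioo a b, 0 ≤ G t) := by
    intro a b ha hb hab hall
    have hsub : Set.Ioo a b ⊆ {θ : ℝ | ¬ (θ ∈ I → G θ < 0)} := by
      intro t ht
      have htI : t ∈ I := ⟨le_trans ha.1 ht.1.le, le_trans ht.2.le hb.2⟩
      intro h
      exact absurd (h htI) (not_lt.2 (hall t ht))
    have hvol : volume (Set.Ioo a b) ≤ 0 := hN ▸ measure_mono hsub
    have h0' : volume (Set.Ioo a b) = 0 := le_antisymm hvol zero_le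
    rw [Real.volume_Ioo] at h0'
    have := ENNReal.ofReal_eq_zero.mp h0'
    linarith
  -- derivative of φ at interior points
  have hφderiv : ∀ θ ∈ Set.Ioo (0 : ℝ) (π / 2),
      HasDerivAt φ (G θ / (r θ ^ 2 + r1 θ ^ 2)) θ := by
    intro θ hθ
    have hmem : I ∈ 𝓝 θ := Icc_mem_nhds hθ.1 hθ.2
    have hθI : θ ∈ I := mem_of_mem_nhds hmem
    have hda : DifferentiableAt ℝ r θ :=
      (hr.contDiffAt hmem).differentiableAt (by norm_num)
    have hdr : HasDerivAt r (r1 θ) θ := by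
      have := hda.hasDerivAt
      rwa [← derivWithin_of_mem_nhds hmem] at this
    have hEq : r1 =ᶠ[𝓝 θ] deriv r := by
      filter_upwards [isOpen_Ioo.mem_nhds hθ] with x hx
      exact derivWithin_of_mem_nhds (Icc_mem_nhds hx.1 hx.2)
    have hC1 : ContDiffOn ℝ 1 (deriv r) (Set.Ioo 0 (π / 2)) :=
      (hr.mono Set.Ioo_subset_Icc_self).deriv_of_isOpen isOpen_Ioo (by norm_num)
    have hda2 : DifferentiableAt ℝ (deriv r) θ :=
      ((hC1.differentiableOn (by norm_num)) θ hθ).differentiableAt (isOpen_Ioo.mem_nhds hθ)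
    have hdr1 : HasDerivAt r1 (r2 θ) θ := by
      have h1 : HasDerivAt (deriv r) (deriv (deriv r) θ) θ := hda2.hasDerivAt
      have h2' : HasDerivAt r1 (deriv (deriv r) θ) θ := h1.congr_of_eventuallyEq hEq
      have h3 : r2 θ = deriv (deriv r) θ := by
        rw [hr2def, derivWithin_of_mem_nhds hmem, hEq.deriv_eq]
      rwa [h3]
    have hrθ : r θ ≠ 0 := hrne θ hθI
    have hdf : HasDerivAt f ((r2 θ * r θ - r1 θ * r1 θ) / r θ ^ 2) θ := hdr1.div hdr hrθ
    have harctan : HasDerivAt (fun x => arctan (f x))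
        (1 / (1 + f θ ^ 2) * ((r2 θ * r θ - r1 θ * r1 θ) / r θ ^ 2)) θ :=
      (Real.hasDerivAt_arctan (f θ)).comp θ hdf
    have hdφ : HasDerivAt φ
        (1 / (1 + f θ ^ 2) * ((r2 θ * r θ - r1 θ * r1 θ) / r θ ^ 2) - 1) θ :=
      harctan.sub (hasDerivAt_id θ)
    have halg : 1 / (1 + f θ ^ 2) * ((r2 θ * r θ - r1 θ * r1 θ) / r θ ^ 2) - 1
        = G θ / (r θ ^ 2 + r1 θ ^ 2) := by
      have hden : r θ ^ 2 + r1 θ ^ 2 ≠ 0 := by positivity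
      have h1f : (1 : ℝ) + f θ ^ 2 ≠ 0 := by positivity
      simp only [hGdef, hfdef]
      field_simp
      ring
    rwa [halg] at hdφ
  have hdenpos : ∀ θ ∈ I, 0 < r θ ^ 2 + r1 θ ^ 2 := by
    intro θ hθ
    have := hpos θ hθ
    positivity
  -- G ≤ 0 on the interior, by continuity
  have hGle : ∀ θ ∈ Set.Ioo (0 : ℝ) (π / 2), G θ ≤ 0 := by
    intro θ hθ
    by_contra hcon
    push_neg at hcon
    have hmem : I ∈ 𝓝 θ := Icc_mem_nhds hθ.1 hθ.2
    have hcont : ContinuousAt G θ := hcG.continuousAt hmem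
    have hev : ∀ᶠ x in 𝓝 θ, 0 ≤ G x := by
      have := hcont.eventually (eventually_gt_nhds hcon)
      filter_upwards [this] with x hx
      exact hx.le
    obtain ⟨⟨a, b⟩, ⟨ha, hb⟩, hsub⟩ := (nhds_basis_Ioo θ).eventually_iff.mp hev
    have ha2 : a < π / 2 := lt_trans ha hθ.2
    have hb2 : 0 < b := lt_trans hθ.1 hb
    refine hGcontra (max a 0) (min b (π / 2)) ⟨le_max_right _ _, max_le ha2.le hπ.le⟩
      ⟨le_min hb2.le hπ.le, min_le_right _ _⟩ ?_ ?_
    · exact lt_of_lt_of_le (max_lt ha hθ.1) (le_min hb.le hθ.2.le)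
    · intro t ht
      have : t ∈ Set.Ioo a b :=
        ⟨lt_of_le_of_lt (le_max_left a 0) ht.1, lt_of_lt_of_le ht.2 (min_le_left _ _)⟩
      exact hsub this
  -- φ is antitone on I
  have hanti : AntitoneOn φ I := by
    refine antitoneOn_of_deriv_nonpos (convex_Icc _ _) hcφ ?_ ?_
    · rw [hIint]
      intro θ hθ
      exact ((hφderiv θ hθ).differentiableAt).differentiableWithinAt
    · rw [hIint]
      intro θ hθ
      rw [(hφderiv θ hθ).deriv]
      have hden := hdenpos θ (Set.Ioo_subset_Icc_self hθ)
      exact div_nonpos_of_nonpos_of_nonneg (hGle θ hθ) hden.le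
  have hφ0 : φ 0 = 0 := by
    simp only [hφdef, hfdef]
    rw [h0]
    simp
  have hφ2 : φ (π / 2) = -(π / 2) := by
    simp only [hφdef, hfdef]
    rw [h2]
    simp
  -- if φ is constant on a subinterval, contradiction
  have hconst : ∀ a b : ℝ, a ∈ I → b ∈ I → a < b → (∀ t ∈ Set.Icc a b, φ t = φ a) → False := by
    intro a b ha hb hab hcst
    refine hGcontra a b ha hb hab ?_
    intro t ht
    have htI : t ∈ Set.Ioo (0:ℝ) (π/2) :=
      ⟨lt_of_le_of_lt ha.1 ht.1, lt_of_lt_of_le ht.2 hb.2⟩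
    have hev : φ =ᶠ[𝓝 t] (fun _ => φ a) := by
      filter_upwards [isOpen_Ioo.mem_nhds ht] with x hx
      exact hcst x (Set.Ioo_subset_Icc_self hx)
    have hd0 : deriv φ t = 0 := by
      rw [hev.deriv_eq, deriv_const]
    have hdd := (hφderiv t htI).deriv
    rw [hd0] at hdd
    have hden := hdenpos t (Set.Ioo_subset_Icc_self htI)
    rcases div_eq_zero_iff.mp hdd.symm with h | h
    · linarith
    · exact absurd h hden.ne'
  -- main part
  intro η hη
  have hηI : η ∈ I := Set.Ioo_subset_Icc_self hη
  have h0I : (0:ℝ) ∈ I := Set.left_mem_Icc.2 hπ.le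
  have h2I : (π/2) ∈ I := Set.right_mem_Icc.2 hπ.le
  have hlt0 : φ η < 0 := by
    have hle : φ η ≤ φ 0 := hanti h0I hηI hη.1.le
    rcases lt_or_eq_of_le hle with h | h
    · rwa [hφ0] at h
    · exfalso
      refine hconst 0 η h0I hηI hη.1 ?_
      intro t ht
      have htI : t ∈ I := ⟨ht.1, le_trans ht.2 hηI.2⟩
      have h1 : φ t ≤ φ 0 := hanti h0I htI ht.1
      have h2' : φ η ≤ φ t := hanti htI hηI ht.2
      rw [h] at h2'
      linarith
  have hgt2 : -(π / 2) < φ η := by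
    have hle : φ (π/2) ≤ φ η := hanti hηI h2I hη.2.le
    rcases lt_or_eq_of_le hle with h | h
    · rwa [hφ2] at h
    · exfalso
      refine hconst η (π/2) hηI h2I hη.2 ?_
      intro t ht
      have htI : t ∈ I := ⟨le_trans hηI.1 ht.1, ht.2⟩
      have h1 : φ t ≤ φ η := hanti hηI htI ht.1
      have h2' : φ (π/2) ≤ φ t := hanti htI h2I ht.2
      exact le_antisymm h1 ((le_of_eq h.symm).trans h2')
  have hφη : φ η = arctan (f η) - η := rfl
  have hA1 : arctan (f η) < η := by rw [hφη] at hlt0; linarith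
  have hA2 : η - π / 2 < arctan (f η) := by rw [hφη] at hgt2; linarith
  have hAmem : arctan (f η) ∈ Set.Ioo (-(π/2)) (π/2) :=
    ⟨Real.neg_pi_div_two_lt_arctan _, Real.arctan_lt_pi_div_two _⟩
  have hηmem : η ∈ Set.Ioo (-(π/2)) (π/2) := ⟨lt_trans (by linarith) hη.1, hη.2⟩
  have hη2mem : η - π/2 ∈ Set.Ioo (-(π/2)) (π/2) := ⟨by linarith [hη.1], by linarith [hη.2]⟩
  constructor
  · have hmono := Real.strictMonoOn_tan hη2mem hAmem hA2
    rw [Real.tan_arctan] at hmono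
    have htan : tan (η - π/2) = -(cos η / sin η) := by
      rw [Real.tan_eq_sin_div_cos, Real.sin_sub_pi_div_two, Real.cos_sub_pi_div_two, neg_div]
    rwa [htan] at hmono
  · have hmono := Real.strictMonoOn_tan hAmem hηmem hA1
    rwa [Real.tan_arctan] at hmono

end
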